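/- arXiv:2008.03255 — 5 statements merged into one kernel-verified Lean document; each statement's English description precedes it below -/
import Mathlib

section
/- For the probability measure P on ℝ with P({j}) = 1/2^j for j ∈ {1,2,3,4,5} and P({6}) = 1/2^5, the third quantization error equals 65/384, attained at the set {1, 7/3, 19/4}. -/
/-- Mass function: f(j) = 1/2^j for j = 1,…,5 and f(6) = 1/2^5. -/
noncomputable def massA (j : ℕ) : ℝ := if j = 6 then 1/2^5 else 1/2^j

/-- Distortion error of a nonempty finite set α for the measure with mass `massA`. -/
noncomputable def errA (α : Finset ℝ) (h : α.Nonempty) : ℝ :=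
  ∑ j ∈ Finset.Icc 1 6, massA j * α.inf' h (fun a => ((j : ℝ) - a)^2)

def uA : Fin 6 → ℕ := ![16,8,4,2,1,1]
def nW (B : Finset (Fin 6)) : ℕ := ∑ k ∈ B, uA k
def nM (B : Finset (Fin 6)) : ℕ := ∑ k ∈ B, uA k * (k.val + 1)
def nS (B : Finset (Fin 6)) : ℕ := ∑ k ∈ B, uA k * (k.val + 1)^2
def DD (B : Finset (Fin 6)) : ℕ := if nW B = 0 then 1 else nW B

-- reindex lemma
lemma reindex (v : ℕ → ℝ) : ∑ j ∈ Finset.Icc 1 6, v j = ∑ k : Fin 6, v (k.val + 1) := by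
  rw [show Finset.Icc 1 6 = ({1,2,3,4,5,6} : Finset ℕ) from by decide,
    Fin.sum_univ_six]
  rw [Finset.sum_insert (by decide), Finset.sum_insert (by decide),
    Finset.sum_insert (by decide), Finset.sum_insert (by decide),
    Finset.sum_insert (by decide), Finset.sum_singleton]
  norm_num [show ((3:Fin 6):ℕ)=3 from rfl, show ((4:Fin 6):ℕ)=4 from rfl,
    show ((5:Fin 6):ℕ)=5 from rfl]
  ring

set_option maxRecDepth 100000 in
lemma keyNat : ∀ g : Fin 6 → Fin 3,
    12 * ((nM (Finset.univ.filter (fun k => g k = 0)))^2 * DD (Finset.univ.filter (fun k => g k = 1)) * DD (Finset.univ.filter (fun k => g k = 2))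
        + (nM (Finset.univ.filter (fun k => g k = 1)))^2 * DD (Finset.univ.filter (fun k => g k = 0)) * DD (Finset.univ.filter (fun k => g k = 2))
        + (nM (Finset.univ.filter (fun k => g k = 2)))^2 * DD (Finset.univ.filter (fun k => g k = 0)) * DD (Finset.univ.filter (fun k => g k = 1)))
    ≤ 2059 * (DD (Finset.univ.filter (fun k => g k = 0)) * DD (Finset.univ.filter (fun k => g k = 1)) * DD (Finset.univ.filter (fun k => g k = 2))) := by
  decide

lemma massA_eq (k : Fin 6) : massA (k.val + 1) = (uA k : ℝ) / 32 := by
  fin_cases k <;> norm_num [massA, uA]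

lemma DD_ge_one (B : Finset (Fin 6)) : 1 ≤ DD B := by
  rw [DD]; split <;> omega

lemma fiber_lb (B : Finset (Fin 6)) (x : ℝ) :
    (nS B : ℝ) / 32 - (nM B : ℝ)^2 / (32 * DD B) ≤
      ∑ k ∈ B, massA (k.val + 1) * (((k.val : ℝ) + 1) - x)^2 := by
  rcases B.eq_empty_or_nonempty with rfl | hB
  · simp [nS, nM, nW, DD]
  · have hW : 1 ≤ nW B := by
      obtain ⟨k, hk⟩ := hB
      calc 1 ≤ uA k := by fin_cases k <;> norm_num [uA]
        _ ≤ nW B := Finset.single_le_sum (f := fun k => uA k) (fun _ _ => Nat.zero_le _) hk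
    have hD : DD B = nW B := by rw [DD, if_neg (by omega)]
    have hsum : ∑ k ∈ B, massA (k.val + 1) * (((k.val : ℝ) + 1) - x)^2
        = (nS B : ℝ)/32 - 2 * x * ((nM B : ℝ)/32) + x^2 * ((nW B : ℝ)/32) := by
      rw [nS, nM, nW]
      push_cast
      rw [Finset.sum_div, Finset.sum_div, Finset.sum_div, Finset.mul_sum, Finset.mul_sum,
        ← Finset.sum_sub_distrib, ← Finset.sum_add_distrib]
      refine Finset.sum_congr rfl fun k _ => ?_
      rw [massA_eq]
      ring
    rw [hsum, hD]
    have hWpos : (0:ℝ) < (nW B : ℝ) := by exact_mod_cast hW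
    have key : ((nW B : ℝ) * x - (nM B : ℝ))^2 ≥ 0 := sq_nonneg _
    have e : (nM B : ℝ)^2 / (32 * (nW B : ℝ)) * (32 * (nW B : ℝ)) = (nM B : ℝ)^2 := by
      field_simp
    nlinarith [key, hWpos, e, sq_nonneg x]

lemma lower_bound (α : Finset ℝ) (h : α.Nonempty) (hcard : α.card ≤ 3) :
    65/384 ≤ errA α h := by
  -- centers
  classical
  obtain ⟨a0, ha0⟩ := id h
  have hlen : α.toList.length ≤ 3 := by simpa [Finset.length_toList] using hcard
  set c : Fin 3 → ℝ := fun i => α.toList.getD i a0 with hc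
  have hcover : ∀ b ∈ α, ∃ i : Fin 3, c i = b := by
    intro b hb
    have : b ∈ α.toList := Finset.mem_toList.2 hb
    obtain ⟨n, hn⟩ := List.mem_iff_get.1 this
    refine ⟨⟨n.val, lt_of_lt_of_le n.isLt hlen⟩, ?_⟩
    simp only [hc]
    rw [List.getD_eq_getElem _ _ (by exact n.isLt)]
    simpa using hn
  have H : ∀ k : Fin 6, ∃ i : Fin 3,
      α.inf' h (fun a => (((k.val + 1 : ℕ) : ℝ) - a)^2) = (((k.val : ℝ) + 1) - c i)^2 := by
    intro k
    obtain ⟨b, hb, hbe⟩ := Finset.exists_mem_eq_inf' h (fun a => (((k.val + 1 : ℕ) : ℝ) - a)^2)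
    obtain ⟨i, hi⟩ := hcover b hb
    exact ⟨i, by rw [hbe, hi]; push_cast; ring⟩
  choose ℓ hℓ using H
  -- rewrite errA
  have he : errA α h = ∑ k : Fin 6, massA (k.val + 1) * (((k.val : ℝ) + 1) - c (ℓ k))^2 := by
    rw [errA, reindex (fun j => massA j * α.inf' h (fun a => ((j : ℝ) - a)^2))]
    exact Finset.sum_congr rfl fun k _ => by rw [hℓ k]
  -- regroup by fibers
  rw [he, ← Finset.sum_fiberwise Finset.univ ℓ
    (fun k => massA (k.val + 1) * (((k.val : ℝ) + 1) - c (ℓ k))^2)]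
  have hfib : ∀ i : Fin 3,
      ∑ k ∈ Finset.univ.filter (fun k => ℓ k = i),
        massA (k.val + 1) * (((k.val : ℝ) + 1) - c (ℓ k))^2
      = ∑ k ∈ Finset.univ.filter (fun k => ℓ k = i),
        massA (k.val + 1) * (((k.val : ℝ) + 1) - c i)^2 := by
    intro i
    refine Finset.sum_congr rfl fun k hk => ?_
    rw [(Finset.mem_filter.1 hk).2]
  have step : ∀ i : Fin 3,
      (nS (Finset.univ.filter (fun k => ℓ k = i)) : ℝ) / 32
        - (nM (Finset.univ.filter (fun k => ℓ k = i)) : ℝ)^2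
            / (32 * DD (Finset.univ.filter (fun k => ℓ k = i)))
      ≤ ∑ k ∈ Finset.univ.filter (fun k => ℓ k = i),
          massA (k.val + 1) * (((k.val : ℝ) + 1) - c (ℓ k))^2 := by
    intro i
    rw [hfib i]
    exact fiber_lb _ (c i)
  have htot : ∑ i : Fin 3, (nS (Finset.univ.filter (fun k => ℓ k = i)) : ℝ) = 177 := by
    have : ∑ i : Fin 3, (nS (Finset.univ.filter (fun k => ℓ k = i)) : ℕ) = 177 := by
      simp only [nS]
      rw [Finset.sum_fiberwise Finset.univ ℓ (fun k => uA k * (k.val + 1)^2)]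
      decide
    exact_mod_cast congrArg (Nat.cast : ℕ → ℝ) this
  set B0 := Finset.univ.filter (fun k => ℓ k = 0) with hB0
  set B1 := Finset.univ.filter (fun k => ℓ k = 1) with hB1
  set B2 := Finset.univ.filter (fun k => ℓ k = 2) with hB2
  have key := keyNat ℓ
  rw [← hB0, ← hB1, ← hB2] at key
  have keyR : 12 * ((nM B0 : ℝ)^2 * (DD B1 : ℝ) * (DD B2 : ℝ)
      + (nM B1 : ℝ)^2 * (DD B0 : ℝ) * (DD B2 : ℝ)
      + (nM B2 : ℝ)^2 * (DD B0 : ℝ) * (DD B1 : ℝ))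
      ≤ 2059 * ((DD B0 : ℝ) * (DD B1 : ℝ) * (DD B2 : ℝ)) := by exact_mod_cast key
  have hd0 : (1:ℝ) ≤ (DD B0 : ℝ) := by exact_mod_cast DD_ge_one B0
  have hd1 : (1:ℝ) ≤ (DD B1 : ℝ) := by exact_mod_cast DD_ge_one B1
  have hd2 : (1:ℝ) ≤ (DD B2 : ℝ) := by exact_mod_cast DD_ge_one B2
  have hp0 : (0:ℝ) < (DD B0 : ℝ) := lt_of_lt_of_le one_pos hd0
  have hp1 : (0:ℝ) < (DD B1 : ℝ) := lt_of_lt_of_le one_pos hd1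
  have hp2 : (0:ℝ) < (DD B2 : ℝ) := lt_of_lt_of_le one_pos hd2
  have hprod : (0:ℝ) < (DD B0 : ℝ) * (DD B1 : ℝ) * (DD B2 : ℝ) := by positivity
  have hQ : (nM B0 : ℝ)^2 / (32 * DD B0) + (nM B1 : ℝ)^2 / (32 * DD B1)
      + (nM B2 : ℝ)^2 / (32 * DD B2) ≤ 2059/384 := by
    rw [← mul_le_mul_iff_left₀ hprod]
    have expand : ((nM B0 : ℝ)^2 / (32 * DD B0) + (nM B1 : ℝ)^2 / (32 * DD B1)
        + (nM B2 : ℝ)^2 / (32 * DD B2)) * ((DD B0 : ℝ) * (DD B1 : ℝ) * (DD B2 : ℝ))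
        = ((nM B0 : ℝ)^2 * (DD B1 : ℝ) * (DD B2 : ℝ)
          + (nM B1 : ℝ)^2 * (DD B0 : ℝ) * (DD B2 : ℝ)
          + (nM B2 : ℝ)^2 * (DD B0 : ℝ) * (DD B1 : ℝ)) / 32 := by
      field_simp
    rw [expand]
    linarith [keyR]
  calc (65:ℝ)/384
      = 177/32 - 2059/384 := by norm_num
    _ ≤ ∑ i : Fin 3, ((nS (Finset.univ.filter (fun k => ℓ k = i)) : ℝ) / 32
          - (nM (Finset.univ.filter (fun k => ℓ k = i)) : ℝ)^2
            / (32 * DD (Finset.univ.filter (fun k => ℓ k = i)))) := by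
        rw [Fin.sum_univ_three, ← hB0, ← hB1, ← hB2]
        rw [Fin.sum_univ_three, ← hB0, ← hB1, ← hB2] at htot
        linarith [hQ, htot]
    _ ≤ _ := Finset.sum_le_sum fun i _ => step i

lemma witnessA : errA {1, 7/3, 19/4} (by simp) = 65/384 := by
  rw [errA, show Finset.Icc 1 6 = ({1,2,3,4,5,6} : Finset ℕ) from by decide]
  rw [show ({1,2,3,4,5,6} : Finset ℕ).sum = fun f => f 1 + f 2 + f 3 + f 4 + f 5 + f 6 from ?_]
  · simp only [Finset.inf'_insert, Finset.inf'_singleton, massA]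
    norm_num [min_def]
  · funext f
    rw [Finset.sum_insert (by decide), Finset.sum_insert (by decide),
      Finset.sum_insert (by decide), Finset.sum_insert (by decide),
      Finset.sum_insert (by decide), Finset.sum_singleton]
    ring

theorem stmt1 :
    sInf {v : ℝ | ∃ (α : Finset ℝ) (h : α.Nonempty), α.card ≤ 3 ∧ v = errA α h}
      = 65/384 ∧
    errA {1, 7/3, 19/4} (by simp) = 65/384 := by
  have hmem : (65/384 : ℝ) ∈ {v : ℝ | ∃ (α : Finset ℝ) (h : α.Nonempty), α.card ≤ 3 ∧ v = errA α h} := by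
    refine ⟨{1, 7/3, 19/4}, by simp, ?_, (witnessA).symm⟩
    rw [Finset.card_insert_of_notMem (by norm_num),
      Finset.card_insert_of_notMem (by norm_num), Finset.card_singleton]
  have hlb : ∀ v ∈ {v : ℝ | ∃ (α : Finset ℝ) (h : α.Nonempty), α.card ≤ 3 ∧ v = errA α h},
      (65/384 : ℝ) ≤ v := by
    rintro v ⟨α, h, hcard, rfl⟩
    exact lower_bound α h hcard
  refine ⟨le_antisymm (csInf_le ⟨65/384, hlb⟩ hmem) (le_csInf ⟨_, hmem⟩ hlb), witnessA⟩
end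

section
/- For the probability measure P on ℝ with P({j}) = 1/2^j for j ∈ {1,2,3,4,5} and P({6}) = 1/2^5, the fifth quantization error equals 1/64, attained at the set {1, 2, 3, 4, 11/2}. -/
lemma lowerA (α : Finset ℝ) (h : α.Nonempty) (hc : α.card ≤ 5) :
    1/64 ≤ errA α h := by
  have hg : ∀ j : ℕ, ∃ a ∈ α, α.inf' h (fun a => ((j:ℝ)-a)^2) = ((j:ℝ)-a)^2 := by
    intro j
    obtain ⟨a, ha, he⟩ := α.exists_mem_eq_inf' h (fun a => ((j:ℝ)-a)^2)
    exact ⟨a, ha, he⟩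
  choose g hgmem hgeq using hg
  obtain ⟨j, hj, k, hk, hne, heq⟩ :=
    Finset.exists_ne_map_eq_of_card_lt_of_maps_to
      (s := Finset.Icc 1 6) (t := α) (by simp; omega) (fun j _ => hgmem j)
  set a := g j with ha
  have hterm : ∀ m ∈ Finset.Icc 1 6, 0 ≤ massA m * α.inf' h (fun a => ((m:ℝ)-a)^2) := by
    intro m _
    apply mul_nonneg
    · unfold massA; split <;> positivity
    · rw [hgeq m]; positivity
  have hsum : massA j * α.inf' h (fun a => ((j:ℝ)-a)^2)
      + massA k * α.inf' h (fun a => ((k:ℝ)-a)^2) ≤ errA α h :=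
    Finset.add_le_sum hterm hj hk hne
  have hmass : ∀ m ∈ Finset.Icc 1 6, (1/32 : ℝ) ≤ massA m := by
    intro m hm
    simp only [Finset.mem_Icc] at hm
    obtain ⟨hm1, hm2⟩ := hm
    interval_cases m <;> norm_num [massA]
  have hd : (1:ℝ) ≤ ((j:ℝ) - k)^2 := by
    rcases hne.lt_or_gt with hlt | hlt
    · have : (j:ℝ) + 1 ≤ k := by exact_mod_cast hlt
      nlinarith
    · have : (k:ℝ) + 1 ≤ j := by exact_mod_cast hlt
      nlinarith
  have h1 : (1/64 : ℝ) ≤ massA j * ((j:ℝ)-a)^2 + massA k * ((k:ℝ)-a)^2 := by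
    have hja : ((j:ℝ)-a)^2 + ((k:ℝ)-a)^2 ≥ 1/2 := by nlinarith [sq_nonneg ((j:ℝ) + k - 2*a)]
    have := hmass j hj
    have := hmass k hk
    nlinarith [sq_nonneg ((j:ℝ)-a), sq_nonneg ((k:ℝ)-a)]
  calc (1/64:ℝ) ≤ _ := h1
    _ = massA j * α.inf' h (fun a => ((j:ℝ)-a)^2)
      + massA k * α.inf' h (fun a => ((k:ℝ)-a)^2) := by rw [hgeq j, hgeq k, ← ha, ← heq]
    _ ≤ errA α h := hsum

lemma errA_opt : errA {1, 2, 3, 4, 11/2} (by simp) = 1/64 := by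
  have hI : Finset.Icc 1 6 = ({1,2,3,4,5,6} : Finset ℕ) := by decide
  rw [errA, hI]
  simp [Finset.sum_insert, Finset.inf'_insert, massA]
  norm_num [min_def]

theorem stmt3 :
    sInf {v : ℝ | ∃ (α : Finset ℝ) (h : α.Nonempty), α.card ≤ 5 ∧ v = errA α h}
      = 1/64 ∧
    errA {1, 2, 3, 4, 11/2} (by simp) = 1/64 := by
  have hcard : ({1, 2, 3, 4, 11/2} : Finset ℝ).card ≤ 5 := by
    refine le_trans (Finset.card_insert_le _ _) ?_
    refine Nat.succ_le_succ (le_trans (Finset.card_insert_le _ _) ?_)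
    refine Nat.succ_le_succ (le_trans (Finset.card_insert_le _ _) ?_)
    refine Nat.succ_le_succ (le_trans (Finset.card_insert_le _ _) ?_)
    simp
  have hmem : (1/64 : ℝ) ∈ {v : ℝ | ∃ (α : Finset ℝ) (h : α.Nonempty),
      α.card ≤ 5 ∧ v = errA α h} :=
    ⟨{1, 2, 3, 4, 11/2}, by simp, hcard, errA_opt.symm⟩
  have hbdd : ∀ v ∈ {v : ℝ | ∃ (α : Finset ℝ) (h : α.Nonempty),
      α.card ≤ 5 ∧ v = errA α h}, (1/64 : ℝ) ≤ v := by
    rintro v ⟨α, h, hc, rfl⟩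
    exact lowerA α h hc
  refine ⟨le_antisymm (csInf_le ⟨1/64, hbdd⟩ hmem) (le_csInf ⟨_, hmem⟩ hbdd), errA_opt⟩
end

section
/- Let P be the probability measure on ℝ supported on {1,…,6} with f(j) = (3/10)^{j−1}·(7/10) for j = 1,…,5 and f(6) = (3/10)^5. Then the second quantization error equals 174296997/1000000000, and it is attained at the set {1, a}, where a = E(X | X ∈ {2,3,4,5,6}). -/
/-- Mass function: f(j) = (3/10)^(j-1)·(7/10) for j = 1,…,5 and f(6) = (3/10)^5. -/
noncomputable def massB (j : ℕ) : ℝ := if j = 6 then (3/10)^5 else (3/10)^(j-1) * (7/10)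

/-- Distortion error of a nonempty finite set α for the measure with mass `massB`. -/
noncomputable def errB (α : Finset ℝ) (h : α.Nonempty) : ℝ :=
  ∑ j ∈ Finset.Icc 1 6, massB j * α.inf' h (fun a => ((j : ℝ) - a)^2)

/-- Conditional expectation E(X | X ∈ {k,…,l}). -/
noncomputable def avB (k l : ℕ) : ℝ :=
  (∑ j ∈ Finset.Icc k l, (j : ℝ) * massB j) / (∑ j ∈ Finset.Icc k l, massB j)

lemma icc16 : Finset.Icc 1 6 = ({1,2,3,4,5,6} : Finset ℕ) := by decide

lemma avB26 : avB 2 6 = 24251/10000 := by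
  have h : Finset.Icc 2 6 = ({2,3,4,5,6} : Finset ℕ) := by decide
  rw [avB, h]
  norm_num [massB, Finset.sum_insert, Finset.mem_insert]

lemma err_pair (b c : ℝ) (h : ({b, c} : Finset ℝ).Nonempty) :
    errB {b, c} h =
      (7/10) * min (((1:ℝ)-b)^2) (((1:ℝ)-c)^2)
      + (21/100) * min (((2:ℝ)-b)^2) (((2:ℝ)-c)^2)
      + (63/1000) * min (((3:ℝ)-b)^2) (((3:ℝ)-c)^2)
      + (189/10000) * min (((4:ℝ)-b)^2) (((4:ℝ)-c)^2)
      + (567/100000) * min (((5:ℝ)-b)^2) (((5:ℝ)-c)^2)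
      + (243/100000) * min (((6:ℝ)-b)^2) (((6:ℝ)-c)^2) := by
  have key : errB {b, c} h
      = ∑ j ∈ Finset.Icc 1 6, massB j * min (((j:ℝ)-b)^2) (((j:ℝ)-c)^2) := by
    rw [errB]
    rcases eq_or_ne b c with rfl | hbc
    · simp
    · congr 1; ext j
      rw [Finset.inf'_insert, Finset.inf'_singleton]
      exact Finset.singleton_nonempty c
  rw [key, icc16]
  norm_num [massB, Finset.sum_insert, Finset.mem_insert]
  ring

set_option maxHeartbeats 4000000 in
lemma key_bound (b c : ℝ) : (174296997/1000000000 : ℝ) ≤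
      (7/10) * min (((1:ℝ)-b)^2) (((1:ℝ)-c)^2)
      + (21/100) * min (((2:ℝ)-b)^2) (((2:ℝ)-c)^2)
      + (63/1000) * min (((3:ℝ)-b)^2) (((3:ℝ)-c)^2)
      + (189/10000) * min (((4:ℝ)-b)^2) (((4:ℝ)-c)^2)
      + (567/100000) * min (((5:ℝ)-b)^2) (((5:ℝ)-c)^2)
      + (243/100000) * min (((6:ℝ)-b)^2) (((6:ℝ)-c)^2) := by
  rcases min_cases (((1:ℝ)-b)^2) (((1:ℝ)-c)^2) with ⟨e1,-⟩|⟨e1,-⟩ <;>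
  rcases min_cases (((2:ℝ)-b)^2) (((2:ℝ)-c)^2) with ⟨e2,-⟩|⟨e2,-⟩ <;>
  rcases min_cases (((3:ℝ)-b)^2) (((3:ℝ)-c)^2) with ⟨e3,-⟩|⟨e3,-⟩ <;>
  rcases min_cases (((4:ℝ)-b)^2) (((4:ℝ)-c)^2) with ⟨e4,-⟩|⟨e4,-⟩ <;>
  rcases min_cases (((5:ℝ)-b)^2) (((5:ℝ)-c)^2) with ⟨e5,-⟩|⟨e5,-⟩ <;>
  rcases min_cases (((6:ℝ)-b)^2) (((6:ℝ)-c)^2) with ⟨e6,-⟩|⟨e6,-⟩ <;>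
    rw [e1,e2,e3,e4,e5,e6]
  · linarith [sq_nonneg (b - (142753/100000))]
  · linarith [sq_nonneg (b - (20185/14251)), sq_nonneg (c - 6)]
  · linarith [sq_nonneg (b - (139918/99433)), sq_nonneg (c - 5)]
  · linarith [sq_nonneg (b - (1978/1417)), sq_nonneg (c - (53/10))]
  · linarith [sq_nonneg (b - (135193/98110)), sq_nonneg (c - 4)]
  · linarith [sq_nonneg (b - (19105/13981)), sq_nonneg (c - (334/79))]
  · linarith [sq_nonneg (b - (132358/97543)), sq_nonneg (c - (55/13))]
  · linarith [sq_nonneg (b - (187/139)), sq_nonneg (c - (439/100))]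
  · linarith [sq_nonneg (b - (123853/93700)), sq_nonneg (c - 3)]
  · linarith [sq_nonneg (b - (1345/1027)), sq_nonneg (c - (2262/727))]
  · linarith [sq_nonneg (b - (121018/93133)), sq_nonneg (c - (345/109))]
  · linarith [sq_nonneg (b - (1708/1327)), sq_nonneg (c - (2577/790))]
  · linarith [sq_nonneg (b - (116293/91810)), sq_nonneg (c - (42/13))]
  · linarith [sq_nonneg (b - (16405/13081)), sq_nonneg (c - (3102/937))]
  · linarith [sq_nonneg (b - (113458/91243)), sq_nonneg (c - (465/139))]
  · linarith [sq_nonneg (b - (16/13)), sq_nonneg (c - (3417/1000))]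
  · linarith [sq_nonneg (b - (100753/79000)), sq_nonneg (c - 2)]
  · linarith [sq_nonneg (b - (14185/11251)), sq_nonneg (c - (14486/7081))]
  · linarith [sq_nonneg (b - (97918/78433)), sq_nonneg (c - (2135/1027))]
  · linarith [sq_nonneg (b - (1378/1117)), sq_nonneg (c - (15431/7270))]
  · linarith [sq_nonneg (b - (93193/77110)), sq_nonneg (c - (236/109))]
  · linarith [sq_nonneg (b - (13105/10981)), sq_nonneg (c - (1546/701))]
  · linarith [sq_nonneg (b - (90358/76543)), sq_nonneg (c - (2495/1117))]
  · linarith [sq_nonneg (b - (127/109)), sq_nonneg (c - (17951/7900))]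
  · linarith [sq_nonneg (b - (81853/72700)), sq_nonneg (c - (29/13))]
  · linarith [sq_nonneg (b - (11485/10351)), sq_nonneg (c - (20786/9181))]
  · linarith [sq_nonneg (b - (79018/72133)), sq_nonneg (c - (3035/1327))]
  · linarith [sq_nonneg (b - (1108/1027)), sq_nonneg (c - (21731/9370))]
  · linarith [sq_nonneg (b - (74293/70810)), sq_nonneg (c - (326/139))]
  · linarith [sq_nonneg (b - (10405/10081)), sq_nonneg (c - (23306/9811))]
  · linarith [sq_nonneg (b - (71458/70243)), sq_nonneg (c - (3395/1417))]
  · linarith [sq_nonneg (b - 1), sq_nonneg (c - (24251/10000))]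
  · linarith [sq_nonneg (b - (24251/10000)), sq_nonneg (c - 1)]
  · linarith [sq_nonneg (b - (3395/1417)), sq_nonneg (c - (71458/70243))]
  · linarith [sq_nonneg (b - (23306/9811)), sq_nonneg (c - (10405/10081))]
  · linarith [sq_nonneg (b - (326/139)), sq_nonneg (c - (74293/70810))]
  · linarith [sq_nonneg (b - (21731/9370)), sq_nonneg (c - (1108/1027))]
  · linarith [sq_nonneg (b - (3035/1327)), sq_nonneg (c - (79018/72133))]
  · linarith [sq_nonneg (b - (20786/9181)), sq_nonneg (c - (11485/10351))]
  · linarith [sq_nonneg (b - (29/13)), sq_nonneg (c - (81853/72700))]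
  · linarith [sq_nonneg (b - (17951/7900)), sq_nonneg (c - (127/109))]
  · linarith [sq_nonneg (b - (2495/1117)), sq_nonneg (c - (90358/76543))]
  · linarith [sq_nonneg (b - (1546/701)), sq_nonneg (c - (13105/10981))]
  · linarith [sq_nonneg (b - (236/109)), sq_nonneg (c - (93193/77110))]
  · linarith [sq_nonneg (b - (15431/7270)), sq_nonneg (c - (1378/1117))]
  · linarith [sq_nonneg (b - (2135/1027)), sq_nonneg (c - (97918/78433))]
  · linarith [sq_nonneg (b - (14486/7081)), sq_nonneg (c - (14185/11251))]
  · linarith [sq_nonneg (b - 2), sq_nonneg (c - (100753/79000))]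
  · linarith [sq_nonneg (b - (3417/1000)), sq_nonneg (c - (16/13))]
  · linarith [sq_nonneg (b - (465/139)), sq_nonneg (c - (113458/91243))]
  · linarith [sq_nonneg (b - (3102/937)), sq_nonneg (c - (16405/13081))]
  · linarith [sq_nonneg (b - (42/13)), sq_nonneg (c - (116293/91810))]
  · linarith [sq_nonneg (b - (2577/790)), sq_nonneg (c - (1708/1327))]
  · linarith [sq_nonneg (b - (345/109)), sq_nonneg (c - (121018/93133))]
  · linarith [sq_nonneg (b - (2262/727)), sq_nonneg (c - (1345/1027))]
  · linarith [sq_nonneg (b - 3), sq_nonneg (c - (123853/93700))]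
  · linarith [sq_nonneg (b - (439/100)), sq_nonneg (c - (187/139))]
  · linarith [sq_nonneg (b - (55/13)), sq_nonneg (c - (132358/97543))]
  · linarith [sq_nonneg (b - (334/79)), sq_nonneg (c - (19105/13981))]
  · linarith [sq_nonneg (b - 4), sq_nonneg (c - (135193/98110))]
  · linarith [sq_nonneg (b - (53/10)), sq_nonneg (c - (1978/1417))]
  · linarith [sq_nonneg (b - 5), sq_nonneg (c - (139918/99433))]
  · linarith [sq_nonneg (b - 6), sq_nonneg (c - (20185/14251))]
  · linarith [sq_nonneg (c - (142753/100000))]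

lemma err_single (b : ℝ) (h : ({b} : Finset ℝ).Nonempty) :
    (174296997/1000000000 : ℝ) ≤ errB {b} h := by
  have key : errB {b} h = ∑ j ∈ Finset.Icc 1 6, massB j * ((j:ℝ)-b)^2 := by
    simp [errB]
  rw [key, icc16]
  norm_num [massB, Finset.sum_insert, Finset.mem_insert]
  nlinarith [sq_nonneg (b - 142753/100000)]

lemma err_pair_val : errB {1, avB 2 6} (by simp) = 174296997/1000000000 := by
  rw [avB26, err_pair]
  have h1 : min (((1:ℝ)-1)^2) (((1:ℝ)-24251/10000)^2) = ((1:ℝ)-1)^2 := by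
    rw [min_eq_left]; norm_num
  have h2 : min (((2:ℝ)-1)^2) (((2:ℝ)-24251/10000)^2) = ((2:ℝ)-24251/10000)^2 := by
    rw [min_eq_right]; norm_num
  have h3 : min (((3:ℝ)-1)^2) (((3:ℝ)-24251/10000)^2) = ((3:ℝ)-24251/10000)^2 := by
    rw [min_eq_right]; norm_num
  have h4 : min (((4:ℝ)-1)^2) (((4:ℝ)-24251/10000)^2) = ((4:ℝ)-24251/10000)^2 := by
    rw [min_eq_right]; norm_num
  have h5 : min (((5:ℝ)-1)^2) (((5:ℝ)-24251/10000)^2) = ((5:ℝ)-24251/10000)^2 := by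
    rw [min_eq_right]; norm_num
  have h6 : min (((6:ℝ)-1)^2) (((6:ℝ)-24251/10000)^2) = ((6:ℝ)-24251/10000)^2 := by
    rw [min_eq_right]; norm_num
  rw [h1, h2, h3, h4, h5, h6]
  norm_num

theorem stmt4 :
    sInf {v : ℝ | ∃ (α : Finset ℝ) (h : α.Nonempty), α.card ≤ 2 ∧ v = errB α h}
      = 174296997/1000000000 ∧
    errB {1, avB 2 6} (by simp) = 174296997/1000000000 := by
  have hval := err_pair_val
  refine ⟨?_, hval⟩
  have hlb : ∀ v ∈ {v : ℝ | ∃ (α : Finset ℝ) (h : α.Nonempty), α.card ≤ 2 ∧ v = errB α h},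
      (174296997/1000000000 : ℝ) ≤ v := by
    rintro v ⟨α, h, hcard, rfl⟩
    interval_cases hc : α.card
    · exact absurd (Finset.card_eq_zero.mp hc) (Finset.nonempty_iff_ne_empty.mp h)
    · obtain ⟨b, rfl⟩ := Finset.card_eq_one.mp hc
      exact err_single b h
    · obtain ⟨b, c, hbc, rfl⟩ := Finset.card_eq_two.mp hc
      rw [err_pair]
      exact key_bound b c
  have hmem : errB {1, avB 2 6} (by simp)
      ∈ {v : ℝ | ∃ (α : Finset ℝ) (h : α.Nonempty), α.card ≤ 2 ∧ v = errB α h} :=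
    ⟨{1, avB 2 6}, by simp, (Finset.card_insert_le _ _).trans (by simp), rfl⟩
  refine le_antisymm (le_of_le_of_eq (csInf_le ⟨_, hlb⟩ hmem) hval) (le_csInf ⟨_, hmem⟩ hlb)
end

section
/- Let P be the probability measure on ℝ supported on {1,…,6} with f(j) = (3/10)^{j−1}·(7/10) for j = 1,…,5 and f(6) = (3/10)^5. Then the third quantization error equals 4779999/100000000, attained at {1, 2, a} where a = E(X | X ∈ {3,4,5,6}). -/
/-! ### Auxiliary integer bookkeeping -/

def wI (j : ℕ) : ℤ :=
  if j = 1 then 70000 else if j = 2 then 21000 else if j = 3 then 6300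
  else if j = 4 then 1890 else if j = 5 then 567 else 243
def blkW (σ : ℕ → Fin 3) (i : Fin 3) : ℤ := ∑ j ∈ (Finset.Icc 1 6).filter (fun j => σ j = i), wI j
def blkB (σ : ℕ → Fin 3) (i : Fin 3) : ℤ := ∑ j ∈ (Finset.Icc 1 6).filter (fun j => σ j = i), wI j * j
def blkA (σ : ℕ → Fin 3) (i : Fin 3) : ℤ := ∑ j ∈ (Finset.Icc 1 6).filter (fun j => σ j = i), wI j * j^2
def blkN (σ : ℕ → Fin 3) (i : Fin 3) : ℤ := blkA σ i * blkW σ i - (blkB σ i)^2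
def blkQ (σ : ℕ → Fin 3) (i : Fin 3) : ℤ := if blkW σ i = 0 then 1 else blkW σ i

lemma wI_pos (j : ℕ) : 0 < wI j := by unfold wI; repeat' split; all_goals norm_num

lemma massB_eq (j : ℕ) (hj : j ∈ Finset.Icc 1 6) : massB j = (wI j : ℝ) / 100000 := by
  simp only [Finset.mem_Icc] at hj
  obtain ⟨h1, h2⟩ := hj
  interval_cases j <;> norm_num [massB, wI]

lemma blkW_nonneg (σ : ℕ → Fin 3) (i : Fin 3) : 0 ≤ blkW σ i :=
  Finset.sum_nonneg fun j _ => (wI_pos j).le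

lemma blkQ_pos (σ : ℕ → Fin 3) (i : Fin 3) : 0 < blkQ σ i := by
  rw [blkQ]
  split
  · norm_num
  · have := blkW_nonneg σ i; omega

lemma blk_empty (σ : ℕ → Fin 3) (i : Fin 3) (h : blkW σ i = 0) :
    (Finset.Icc 1 6).filter (fun j => σ j = i) = ∅ := by
  by_contra hne
  obtain ⟨j, hj⟩ := Finset.nonempty_of_ne_empty hne
  have h1 : 0 < wI j := wI_pos j
  have h2 : wI j ≤ blkW σ i := Finset.single_le_sum (fun k _ => (wI_pos k).le) hj
  omega

lemma block_le (σ : ℕ → Fin 3) (i : Fin 3) (t : ℝ) :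
    (blkN σ i : ℝ) / ((blkQ σ i : ℝ) * 100000) ≤
      ∑ j ∈ (Finset.Icc 1 6).filter (fun j => σ j = i), massB j * ((j : ℝ) - t)^2 := by
  set F := (Finset.Icc 1 6).filter (fun j => σ j = i) with hF
  have hmem : ∀ j ∈ F, j ∈ Finset.Icc 1 6 := fun j hj => (Finset.mem_filter.1 hj).1
  have step1 : ∀ j ∈ F, massB j * ((j : ℝ) - t)^2
      = ((wI j : ℝ) * (j : ℝ)^2 - (wI j : ℝ) * (j : ℝ) * (2*t) + (wI j : ℝ) * t^2)/100000 := by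
    intro j hj; rw [massB_eq j (hmem j hj)]; ring
  have hexp : ∑ j ∈ F, massB j * ((j : ℝ) - t)^2
      = ((blkA σ i : ℝ) - 2 * (blkB σ i : ℝ) * t + (blkW σ i : ℝ) * t^2) / 100000 := by
    rw [Finset.sum_congr rfl step1, ← Finset.sum_div, Finset.sum_add_distrib,
      Finset.sum_sub_distrib, ← Finset.sum_mul, ← Finset.sum_mul, blkA, blkB, blkW, ← hF]
    push_cast
    ring
  rw [hexp]
  rcases eq_or_lt_of_le (blkW_nonneg σ i) with h0 | hpos
  · have hFe : F = ∅ := blk_empty σ i h0.symm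
    have hB : blkB σ i = 0 := by rw [blkB, ← hF, hFe]; simp
    have hA : blkA σ i = 0 := by rw [blkA, ← hF, hFe]; simp
    have hN : blkN σ i = 0 := by rw [blkN, hB, hA]; ring
    rw [hN, hA, hB, ← h0]
    norm_num
  · have hQ : blkQ σ i = blkW σ i := by rw [blkQ, if_neg (by omega)]
    rw [hQ, blkN]
    have hw : (0:ℝ) < (blkW σ i : ℝ) := by exact_mod_cast hpos
    rw [div_le_div_iff₀ (by positivity) (by norm_num)]
    push_cast
    nlinarith [sq_nonneg ((blkW σ i : ℝ) * t - (blkB σ i : ℝ)), sq_nonneg t, hw.le]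

theorem intkey : ∀ s1 s2 s3 s4 s5 s6 : Fin 3,
    (fun σ => 4779999 * (blkQ σ 0 * blkQ σ 1 * blkQ σ 2) ≤
      1000 * (blkN σ 0 * blkQ σ 1 * blkQ σ 2 + blkN σ 1 * blkQ σ 0 * blkQ σ 2 + blkN σ 2 * blkQ σ 0 * blkQ σ 1))
    (fun j => if j = 1 then s1 else if j = 2 then s2 else if j = 3 then s3
      else if j = 4 then s4 else if j = 5 then s5 else s6) := by decide

lemma intkey' (σ : ℕ → Fin 3) :
    4779999 * (blkQ σ 0 * blkQ σ 1 * blkQ σ 2) ≤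
      1000 * (blkN σ 0 * blkQ σ 1 * blkQ σ 2 + blkN σ 1 * blkQ σ 0 * blkQ σ 2 + blkN σ 2 * blkQ σ 0 * blkQ σ 1) := by
  set σ' : ℕ → Fin 3 := fun j => if j = 1 then σ 1 else if j = 2 then σ 2 else if j = 3 then σ 3
      else if j = 4 then σ 4 else if j = 5 then σ 5 else σ 6 with hσ'
  have hagree : ∀ j ∈ Finset.Icc 1 6, σ j = σ' j := by
    intro j hj
    simp only [Finset.mem_Icc] at hj
    obtain ⟨h1, h2⟩ := hj
    interval_cases j <;> simp [hσ']
  have hfilter : ∀ i : Fin 3, (Finset.Icc 1 6).filter (fun j => σ j = i)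
      = (Finset.Icc 1 6).filter (fun j => σ' j = i) := by
    intro i
    exact Finset.filter_congr fun j hj => by rw [hagree j hj]
  have hW : ∀ i, blkW σ i = blkW σ' i := fun i => by rw [blkW, blkW, hfilter i]
  have hB : ∀ i, blkB σ i = blkB σ' i := fun i => by rw [blkB, blkB, hfilter i]
  have hA : ∀ i, blkA σ i = blkA σ' i := fun i => by rw [blkA, blkA, hfilter i]
  have hN : ∀ i, blkN σ i = blkN σ' i := fun i => by rw [blkN, blkN, hW, hB, hA]
  have hQ : ∀ i, blkQ σ i = blkQ σ' i := fun i => by rw [blkQ, blkQ, hW]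
  rw [hN, hN, hN, hQ, hQ, hQ]
  exact intkey (σ 1) (σ 2) (σ 3) (σ 4) (σ 5) (σ 6)

lemma sum_ge (σ : ℕ → Fin 3) (p : Fin 3 → ℝ) :
    (4779999/100000000 : ℝ) ≤ ∑ j ∈ Finset.Icc 1 6, massB j * ((j : ℝ) - p (σ j))^2 := by
  have hfib := Finset.sum_fiberwise (Finset.Icc 1 6) σ
    (fun j => massB j * ((j : ℝ) - p (σ j))^2)
  rw [← hfib]
  have hblock : ∀ i : Fin 3,
      (blkN σ i : ℝ) / ((blkQ σ i : ℝ) * 100000) ≤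
        ∑ j ∈ (Finset.Icc 1 6).filter (fun j => σ j = i), massB j * ((j : ℝ) - p (σ j))^2 := by
    intro i
    have : ∑ j ∈ (Finset.Icc 1 6).filter (fun j => σ j = i), massB j * ((j : ℝ) - p (σ j))^2
        = ∑ j ∈ (Finset.Icc 1 6).filter (fun j => σ j = i), massB j * ((j : ℝ) - p i)^2 :=
      Finset.sum_congr rfl fun j hj => by rw [(Finset.mem_filter.1 hj).2]
    rw [this]
    exact block_le σ i (p i)
  have hsum : ∑ i : Fin 3, (blkN σ i : ℝ) / ((blkQ σ i : ℝ) * 100000) ≤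
      ∑ i : Fin 3, ∑ j ∈ (Finset.Icc 1 6).filter (fun j => σ j = i),
        massB j * ((j : ℝ) - p (σ j))^2 :=
    Finset.sum_le_sum fun i _ => hblock i
  refine le_trans ?_ hsum
  rw [Fin.sum_univ_three]
  have hq0 : (0:ℝ) < (blkQ σ 0 : ℝ) := by exact_mod_cast blkQ_pos σ 0
  have hq1 : (0:ℝ) < (blkQ σ 1 : ℝ) := by exact_mod_cast blkQ_pos σ 1
  have hq2 : (0:ℝ) < (blkQ σ 2 : ℝ) := by exact_mod_cast blkQ_pos σ 2
  have hkey : (4779999:ℝ) * ((blkQ σ 0 : ℝ) * (blkQ σ 1 : ℝ) * (blkQ σ 2 : ℝ)) ≤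
      1000 * ((blkN σ 0 : ℝ) * (blkQ σ 1 : ℝ) * (blkQ σ 2 : ℝ)
        + (blkN σ 1 : ℝ) * (blkQ σ 0 : ℝ) * (blkQ σ 2 : ℝ)
        + (blkN σ 2 : ℝ) * (blkQ σ 0 : ℝ) * (blkQ σ 1 : ℝ)) := by
    exact_mod_cast intkey' σ
  rw [div_add_div _ _ (by positivity) (by positivity), div_add_div _ _ (by positivity) (by positivity),
    div_le_div_iff₀ (by norm_num) (by positivity)]
  nlinarith [hkey, mul_pos hq0 hq1, mul_pos hq1 hq2, mul_pos hq0 hq2]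

lemma errB_ge (α : Finset ℝ) (h : α.Nonempty) (hc : α.card ≤ 3) :
    (4779999/100000000 : ℝ) ≤ errB α h := by
  obtain ⟨a₀, ha₀⟩ := h
  set p : Fin 3 → ℝ := fun i => α.toList.getD i a₀ with hp
  have hsurj : ∀ x ∈ α, ∃ i : Fin 3, p i = x := by
    intro x hx
    have hx' : x ∈ α.toList := Finset.mem_toList.2 hx
    obtain ⟨k, hk, hkx⟩ := List.mem_iff_getElem.1 hx'
    have hk3 : k < 3 := lt_of_lt_of_le hk (by rw [Finset.length_toList]; exact hc)
    refine ⟨⟨k, hk3⟩, ?_⟩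
    show α.toList.getD k a₀ = x
    simp [List.getD, List.getElem?_eq_getElem hk, hkx]
  have hsel : ∀ j : ℕ, ∃ i : Fin 3, j ∈ Finset.Icc 1 6 →
      Finset.inf' α ⟨a₀, ha₀⟩ (fun a => ((j : ℝ) - a)^2) = ((j : ℝ) - p i)^2 := by
    intro j
    obtain ⟨x, hxα, hxeq⟩ := Finset.exists_mem_eq_inf' ⟨a₀, ha₀⟩ (fun a => ((j : ℝ) - a)^2)
    obtain ⟨i, hi⟩ := hsurj x hxα
    exact ⟨i, fun _ => by rw [hxeq, hi]⟩
  choose σ hσ using hsel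
  have : errB α ⟨a₀, ha₀⟩ = ∑ j ∈ Finset.Icc 1 6, massB j * ((j : ℝ) - p (σ j))^2 := by
    unfold errB
    exact Finset.sum_congr rfl fun j hj => by rw [hσ j hj]
  rw [this]
  exact sum_ge σ p

lemma Icc16 : Finset.Icc (1:ℕ) 6 = {1, 2, 3, 4, 5, 6} := rfl
lemma Icc36 : Finset.Icc (3:ℕ) 6 = {3, 4, 5, 6} := rfl

lemma avB_val : avB 3 6 = 3417/1000 := by
  rw [avB, Icc36]
  norm_num [massB]

lemma errB_val : errB {1, 2, avB 3 6} (by simp) = 4779999/100000000 := by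
  rw [errB, Icc16, avB_val]
  norm_num [Finset.sum_insert, Finset.mem_insert, Finset.inf'_insert, Finset.inf'_singleton,
    massB, min_def]

theorem stmt5 :
    sInf {v : ℝ | ∃ (α : Finset ℝ) (h : α.Nonempty), α.card ≤ 3 ∧ v = errB α h}
      = 4779999/100000000 ∧
    errB {1, 2, avB 3 6} (by simp) = 4779999/100000000 := by
  have hcard : ({1, 2, avB 3 6} : Finset ℝ).card ≤ 3 := by
    refine le_trans (Finset.card_insert_le _ _) ?_
    have := Finset.card_insert_le (2:ℝ) ({avB 3 6} : Finset ℝ)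
    simp only [Finset.card_singleton] at this ⊢
    omega
  have hmem : (4779999/100000000 : ℝ) ∈
      {v : ℝ | ∃ (α : Finset ℝ) (h : α.Nonempty), α.card ≤ 3 ∧ v = errB α h} :=
    ⟨{1, 2, avB 3 6}, by simp, hcard, errB_val.symm⟩
  have hlb : ∀ v ∈ {v : ℝ | ∃ (α : Finset ℝ) (h : α.Nonempty), α.card ≤ 3 ∧ v = errB α h},
      (4779999/100000000 : ℝ) ≤ v := by
    rintro v ⟨α, h, hc, rfl⟩
    exact errB_ge α h hc
  refine ⟨le_antisymm (csInf_le ⟨_, hlb⟩ hmem) (le_csInf ⟨_, hmem⟩ hlb), errB_val⟩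
end

section
/- Let P be the probability measure on ℝ supported on {1/n : n ∈ ℕ, n ≥ 1} with P({1/k}) = 1/2^k. Then the mean of P is log 2, and the first quantization error (the variance) equals (π² − 18 log²2)/12. -/
open Real Filter Set Topology

noncomputable def Fdl : ℝ → ℝ := fun x => ∑' n : ℕ, x ^ (n + 1) / ((n + 1 : ℝ) ^ 2)

lemma summable_inv_sq : Summable (fun n : ℕ => 1 / ((n + 1 : ℝ) ^ 2)) := by
  have := Real.summable_one_div_nat_pow.2 (show 1 < 2 by norm_num)
  have h := (summable_nat_add_iff 1).2 this
  simpa using h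

lemma summable_Fdl {x : ℝ} (hx : |x| ≤ 1) :
    Summable (fun n : ℕ => x ^ (n + 1) / ((n + 1 : ℝ) ^ 2)) := by
  refine Summable.of_norm_bounded summable_inv_sq (fun n => ?_)
  rw [norm_div, Real.norm_eq_abs, Real.norm_eq_abs, abs_pow]
  have h1 : |x| ^ (n + 1) ≤ 1 := pow_le_one₀ (abs_nonneg x) hx
  have h2 : |((n + 1 : ℝ) ^ 2)| = (n + 1 : ℝ) ^ 2 := abs_of_pos (by positivity)
  rw [h2, div_le_div_iff₀ (by positivity) (by positivity)]
  nlinarith [pow_nonneg (abs_nonneg x) (n+1), sq_nonneg ((n:ℝ)+1)]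

lemma Fdl_zero : Fdl 0 = 0 := by
  simp [Fdl]

lemma Fdl_one : Fdl 1 = Real.pi ^ 2 / 6 := by
  have h := hasSum_zeta_two
  have h0 : (fun n : ℕ => (1 : ℝ) / (n : ℝ) ^ 2) 0 = 0 := by simp
  have h1 : HasSum (fun n : ℕ => (1 : ℝ) / ((n + 1 : ℕ) : ℝ) ^ 2) (Real.pi ^ 2 / 6) := by
    have := (hasSum_nat_add_iff' 1).2 h
    simpa using this
  have : Fdl 1 = ∑' n : ℕ, (1 : ℝ) / ((n + 1 : ℕ) : ℝ) ^ 2 := by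
    unfold Fdl
    congr 1; funext n; push_cast; simp
  rw [this, h1.tsum_eq]

lemma continuousOn_Fdl : ContinuousOn Fdl (Set.Icc (-1 : ℝ) 1) := by
  rw [continuousOn_iff_continuous_restrict]
  have : (Set.Icc (-1:ℝ) 1).restrict Fdl
      = fun x : Set.Icc (-1:ℝ) 1 => ∑' n : ℕ, (x : ℝ) ^ (n + 1) / ((n + 1 : ℝ) ^ 2) := rfl
  change Continuous (fun x : Set.Icc (-1:ℝ) 1 => ∑' n : ℕ, (x : ℝ) ^ (n + 1) / ((n + 1 : ℝ) ^ 2))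
  apply continuous_tsum (u := fun n : ℕ => 1 / ((n + 1 : ℝ) ^ 2))
  · intro n
    exact (continuous_subtype_val.pow (n+1)).div_const _
  · exact summable_inv_sq
  · rintro n ⟨x, hx⟩
    have hx1 : |x| ≤ 1 := abs_le.2 ⟨hx.1, hx.2⟩
    rw [norm_div, Real.norm_eq_abs, Real.norm_eq_abs, abs_pow,
      abs_of_pos (show (0:ℝ) < (n+1:ℝ)^2 by positivity),
      div_le_div_iff₀ (by positivity) (by positivity)]
    nlinarith [pow_le_one₀ (abs_nonneg x) hx1 (n := n+1), sq_nonneg ((n:ℝ)+1)]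

lemma hasDerivAt_Fdl {x : ℝ} (hx : |x| < 1) :
    HasDerivAt Fdl (∑' n : ℕ, x ^ n / (n + 1 : ℝ)) x := by
  set r : ℝ := (|x| + 1) / 2 with hr
  have hr0 : 0 ≤ r := by positivity
  have hr1 : r < 1 := by rw [hr]; linarith
  have hxr : |x| < r := by rw [hr]; linarith
  have := hasDerivAt_tsum_of_isPreconnected
    (u := fun n : ℕ => r ^ n)
    (g := fun (n : ℕ) (y : ℝ) => y ^ (n + 1) / ((n + 1 : ℝ) ^ 2))
    (g' := fun (n : ℕ) (y : ℝ) => y ^ n / (n + 1 : ℝ))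
    (t := Set.Ioo (-r) r) (y₀ := 0) (y := x)
    (summable_geometric_of_lt_one hr0 hr1) isOpen_Ioo (convex_Ioo _ _).isPreconnected
    ?_ ?_ ?_ ?_ ?_
  · exact this
  · intro n y _
    have h1 : HasDerivAt (fun y : ℝ => y ^ (n + 1)) ((n + 1 : ℝ) * y ^ n) y := by
      simpa using (hasDerivAt_pow (n + 1) y)
    have := h1.div_const ((n + 1 : ℝ) ^ 2)
    refine this.congr_deriv ?_
    field_simp
  · intro n y hy
    have hy' : |y| ≤ r := le_of_lt (abs_lt.2 ⟨hy.1, hy.2⟩)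
    rw [Real.norm_eq_abs, abs_div, abs_pow, abs_of_pos (show (0:ℝ) < (n+1:ℝ) by positivity)]
    calc |y| ^ n / (n + 1 : ℝ) ≤ |y| ^ n / 1 := by
          apply div_le_div_of_nonneg_left (by positivity) one_pos ?_ |>.trans_eq (by ring)
          · exact_mod_cast Nat.succ_le_succ (Nat.zero_le n)
      _ = |y| ^ n := by ring
      _ ≤ r ^ n := pow_le_pow_left₀ (abs_nonneg y) hy' n
  · exact Set.mem_Ioo.2 ⟨by linarith [abs_nonneg x], by linarith [abs_nonneg x]⟩
  · simpa using summable_zero.congr (fun n => by simp)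
  · exact Set.mem_Ioo.2 ⟨neg_lt_of_abs_lt hxr, lt_of_abs_lt hxr⟩

lemma hasDerivAt_Fdl' {x : ℝ} (h0 : 0 < x) (h1 : x < 1) :
    HasDerivAt Fdl (-Real.log (1 - x) / x) x := by
  have hx : |x| < 1 := abs_lt.2 ⟨by linarith, h1⟩
  have h := hasDerivAt_Fdl hx
  have hs : HasSum (fun n : ℕ => x ^ (n + 1) / (n + 1 : ℝ)) (-Real.log (1 - x)) :=
    Real.hasSum_pow_div_log_of_abs_lt_one hx
  have hs' : HasSum (fun n : ℕ => x ^ n / (n + 1 : ℝ)) (-Real.log (1 - x) / x) := by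
    have h2 := hs.div_const x
    have heq : (fun n : ℕ => x ^ (n + 1) / (n + 1 : ℝ) / x) = fun n : ℕ => x ^ n / (n + 1 : ℝ) := by
      funext n
      rw [pow_succ]
      field_simp
    rwa [heq] at h2
  rwa [hs'.tsum_eq] at h


noncomputable def Hdl : ℝ → ℝ := fun x => Fdl x + Fdl (1 - x) + Real.log x * Real.log (1 - x)

lemma hasDerivAt_Hdl {x : ℝ} (h0 : 0 < x) (h1 : x < 1) : HasDerivAt Hdl 0 x := by
  have hA : HasDerivAt Fdl (-Real.log (1 - x) / x) x := hasDerivAt_Fdl' h0 h1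
  have hB0 : HasDerivAt Fdl (-Real.log (1 - (1 - x)) / (1 - x)) (1 - x) :=
    hasDerivAt_Fdl' (by linarith) (by linarith)
  have hsub : HasDerivAt (fun y : ℝ => 1 - y) (-1) x := by
    simpa using (hasDerivAt_id x).const_sub 1
  have hB : HasDerivAt (fun y => Fdl (1 - y)) (-Real.log x / (1 - x) * (-1)) x := by
    have := hB0.comp x hsub
    simpa [Function.comp_def] using this
  have hlx : HasDerivAt Real.log x⁻¹ x := Real.hasDerivAt_log (ne_of_gt h0)
  have hl1x : HasDerivAt (fun y => Real.log (1 - y)) (-(1 - x)⁻¹) x := by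
    have := (Real.hasDerivAt_log (x := 1 - x) (by linarith : (0:ℝ) < 1 - x).ne').comp x hsub
    simpa [Function.comp_def] using this
  have hC : HasDerivAt (fun y => Real.log y * Real.log (1 - y))
      (x⁻¹ * Real.log (1 - x) + Real.log x * (-(1 - x)⁻¹)) x := hlx.mul hl1x
  have := (hA.add hB).add hC
  refine this.congr_deriv ?_
  have hx : x ≠ 0 := ne_of_gt h0
  have h1x : (1 : ℝ) - x ≠ 0 := by linarith
  field_simp
  ring

lemma Hdl_const {x : ℝ} (h0 : 0 < x) (h1 : x < 1) : Hdl x = Hdl (1/2) := by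
  refine (convex_Ioo (0:ℝ) 1).is_const_of_fderivWithin_eq_zero (𝕜 := ℝ) (f := Hdl)
    ?_ ?_ ⟨h0, h1⟩ (by norm_num)
  · intro y hy
    exact ((hasDerivAt_Hdl hy.1 hy.2).differentiableAt).differentiableWithinAt
  · intro y hy
    rw [fderivWithin_of_isOpen isOpen_Ioo hy]
    have := (hasDerivAt_Hdl hy.1 hy.2).hasFDerivAt.fderiv
    rw [this]
    ext
    simp [Hdl]

lemma Fdl_half : Fdl (1/2) = Real.pi ^ 2 / 12 - (Real.log 2) ^ 2 / 2 := by
  -- limit of Hdl at 1 within Ioo 0 1 is π²/6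
  have hne : (𝓝[Set.Ioo (0:ℝ) 1] 1).NeBot := by
    refine mem_closure_iff_nhdsWithin_neBot.1 ?_
    rw [closure_Ioo (by norm_num : (0:ℝ) ≠ 1)]
    exact ⟨le_of_lt one_pos, le_refl 1⟩
  have hmap : Tendsto (fun x : ℝ => 1 - x) (𝓝[Set.Ioo (0:ℝ) 1] 1) (𝓝[Set.Ioo (0:ℝ) 1] 0) := by
    rw [tendsto_nhdsWithin_iff]
    constructor
    · have : Tendsto (fun x : ℝ => 1 - x) (𝓝 1) (𝓝 (1 - 1)) :=
        (continuous_const.sub continuous_id).tendsto 1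
      simp only [sub_self] at this
      exact this.mono_left nhdsWithin_le_nhds
    · exact eventually_nhdsWithin_of_forall
        (fun x hx => ⟨by linarith [hx.2], by linarith [hx.1]⟩)
  have hIoo_sub : Set.Ioo (0:ℝ) 1 ⊆ Set.Icc (-1:ℝ) 1 := fun y hy =>
    ⟨by linarith [hy.1], le_of_lt hy.2⟩
  have hF1 : Tendsto Fdl (𝓝[Set.Ioo (0:ℝ) 1] 1) (𝓝 (Real.pi ^ 2 / 6)) := by
    have := (continuousOn_Fdl 1 (by norm_num)).mono hIoo_sub
    rw [ContinuousWithinAt, Fdl_one] at this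
    exact this
  have hF0 : Tendsto (fun x => Fdl (1 - x)) (𝓝[Set.Ioo (0:ℝ) 1] 1) (𝓝 0) := by
    have h0c : ContinuousWithinAt Fdl (Set.Ioo (0:ℝ) 1) 0 :=
      (continuousOn_Fdl 0 (by norm_num)).mono hIoo_sub
    rw [ContinuousWithinAt, Fdl_zero] at h0c
    exact h0c.comp hmap
  have hmap0 : Tendsto (fun x : ℝ => 1 - x) (𝓝[Set.Ioo (0:ℝ) 1] 1) (𝓝[>] (0:ℝ)) :=
    hmap.mono_right (nhdsWithin_mono _ (fun y hy => hy.1))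
  have hle : 𝓝[Set.Ioo (0:ℝ) 1] (1:ℝ) ≤ 𝓝[≠] (1:ℝ) :=
    nhdsWithin_mono _ (fun y hy => ne_of_lt hy.2)
  have hlog : Tendsto (fun x : ℝ => Real.log x * Real.log (1 - x))
      (𝓝[Set.Ioo (0:ℝ) 1] 1) (𝓝 0) := by
    have t1 : Tendsto (fun x : ℝ => Real.log x / (x - 1)) (𝓝[Set.Ioo (0:ℝ) 1] 1) (𝓝 1) := by
      have hd : HasDerivAt Real.log 1 1 := by simpa using Real.hasDerivAt_log one_ne_zero
      have hsl := (hasDerivAt_iff_tendsto_slope.1 hd).mono_left hle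
      refine hsl.congr' ?_
      refine eventually_nhdsWithin_of_forall (fun x hx => ?_)
      simp [slope_def_field, div_eq_div_iff]
    have t2 : Tendsto (fun x : ℝ => (x - 1) * Real.log (1 - x))
        (𝓝[Set.Ioo (0:ℝ) 1] 1) (𝓝 0) := by
      have base := tendsto_log_mul_rpow_nhdsGT_zero (r := 1) one_pos
      have comp := base.comp hmap0
      have : Tendsto (fun x : ℝ => Real.log (1 - x) * (1 - x)) (𝓝[Set.Ioo (0:ℝ) 1] 1) (𝓝 0) := by
        refine comp.congr' ?_
        refine eventually_nhdsWithin_of_forall (fun x hx => ?_)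
        simp [Real.rpow_one]
      have := this.neg
      simp only [neg_zero] at this
      refine this.congr' ?_
      refine eventually_nhdsWithin_of_forall (fun x hx => ?_)
      ring
    have := t1.mul t2
    simp only [one_mul] at this
    refine this.congr' ?_
    refine eventually_nhdsWithin_of_forall (fun x hx => ?_)
    have hx1 : x - 1 ≠ 0 := sub_ne_zero.2 (ne_of_lt hx.2)
    field_simp
  have hH : Tendsto Hdl (𝓝[Set.Ioo (0:ℝ) 1] 1) (𝓝 (Real.pi ^ 2 / 6)) := by
    have := (hF1.add hF0).add hlog
    have e : Hdl = fun x => Fdl x + Fdl (1 - x) + Real.log x * Real.log (1 - x) := rfl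
    rw [e]
    simpa only [add_zero] using this
  have hHc : Tendsto Hdl (𝓝[Set.Ioo (0:ℝ) 1] 1) (𝓝 (Hdl (1/2))) := by
    refine Tendsto.congr' ?_ tendsto_const_nhds
    refine eventually_nhdsWithin_of_forall (fun x hx => ?_)
    exact (Hdl_const hx.1 hx.2).symm
  have hval : Hdl (1/2) = Real.pi ^ 2 / 6 := tendsto_nhds_unique hHc hH
  have hexp : Hdl (1/2) = 2 * Fdl (1/2) + (Real.log 2) ^ 2 := by
    unfold Hdl
    norm_num
    rw [Real.log_div one_ne_zero two_ne_zero, Real.log_one]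
    ring
  rw [hexp] at hval
  linarith

theorem stmt8 :
    (∑' k : ℕ, (1/2^(k+1) : ℝ) * (1/(k+1 : ℝ))) = Real.log 2 ∧
    (∑' k : ℕ, (1/2^(k+1) : ℝ) * (1/(k+1 : ℝ) - Real.log 2)^2)
      = (Real.pi^2 - 18 * (Real.log 2)^2) / 12 := by
  set L := Real.log 2 with hL
  have habs : |(1/2 : ℝ)| < 1 := by rw [abs_of_pos]; norm_num; norm_num
  have hlog : -Real.log (1 - 1/2) = L := by
    rw [hL]
    norm_num
    rw [Real.log_div one_ne_zero two_ne_zero, Real.log_one]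
    ring
  have hS1 : HasSum (fun k : ℕ => (1/2 : ℝ) ^ (k+1) / (k+1 : ℝ)) L := by
    have := Real.hasSum_pow_div_log_of_abs_lt_one habs
    rwa [hlog] at this
  have hS0 : HasSum (fun k : ℕ => (1/2 : ℝ) ^ (k+1)) 1 := by
    have := (hasSum_geometric_of_lt_one (by norm_num : (0:ℝ) ≤ 1/2)
      (by norm_num : (1/2 : ℝ) < 1)).mul_left (1/2 : ℝ)
    norm_num at this
    have heq : (fun k : ℕ => (1/2 : ℝ) * (1/2 : ℝ) ^ k) = fun k : ℕ => (1/2 : ℝ) ^ (k+1) := by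
      funext k; rw [pow_succ]; ring
    rwa [heq] at this
  have hS2 : HasSum (fun k : ℕ => (1/2 : ℝ) ^ (k+1) / ((k+1 : ℝ) ^ 2)) (Fdl (1/2)) := by
    have hs := summable_Fdl (x := 1/2) (le_of_lt habs)
    exact hs.hasSum
  have hkey : ∀ k : ℕ, (1/2^(k+1) : ℝ) = (1/2 : ℝ) ^ (k+1) := by
    intro k; rw [div_pow]; norm_num
  constructor
  · have : (fun k : ℕ => (1/2^(k+1) : ℝ) * (1/(k+1 : ℝ)))
        = fun k : ℕ => (1/2 : ℝ) ^ (k+1) / (k+1 : ℝ) := by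
      funext k; rw [hkey k]; ring
    rw [this, hS1.tsum_eq]
  · have hcomb : HasSum (fun k : ℕ => (1/2 : ℝ) ^ (k+1) * (1/(k+1 : ℝ) - L)^2)
        (Fdl (1/2) - 2*L*L + L^2 * 1) := by
      have h := (hS2.sub (hS1.mul_left (2*L))).add (hS0.mul_left (L^2))
      have heq : (fun k : ℕ => (1/2 : ℝ) ^ (k+1) / ((k+1 : ℝ) ^ 2)
            - 2*L * ((1/2 : ℝ) ^ (k+1) / (k+1 : ℝ)) + L^2 * (1/2 : ℝ) ^ (k+1))
          = fun k : ℕ => (1/2 : ℝ) ^ (k+1) * (1/(k+1 : ℝ) - L)^2 := by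
        funext k
        have hk : ((k : ℝ) + 1) ≠ 0 := by positivity
        field_simp
        ring
      rwa [heq] at h
    have : (fun k : ℕ => (1/2^(k+1) : ℝ) * (1/(k+1 : ℝ) - L)^2)
        = fun k : ℕ => (1/2 : ℝ) ^ (k+1) * (1/(k+1 : ℝ) - L)^2 := by
      funext k; rw [hkey k]
    rw [this, hcomb.tsum_eq, Fdl_half]
    ring
end
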